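/- A metric space (X,d) is Bourbaki-complete (every Bourbaki-Cauchy sequence has a cluster point) if and only if every closed Bourbaki-bounded subset of X is compact. -/

import Mathlib

/-- m-fold ε-enlargement: `iterBall x ε 0 = ball x ε`, corresponding to B^{m+1}. -/
def iterBall {X : Type*} [PseudoMetricSpace X] (x : X) (ε : ℝ) : ℕ → Set X
  | 0 => Metric.ball x ε
  | (m+1) => ⋃ y ∈ iterBall x ε m, Metric.ball y ε

/-- ε-chainable component of x. -/
def chainBall {X : Type*} [PseudoMetricSpace X] (x : X) (ε : ℝ) : Set X :=
  ⋃ m, iterBall x ε m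

/-- Bourbaki-bounded subset of a metric space. -/
def BourbakiBounded {X : Type*} [PseudoMetricSpace X] (B : Set X) : Prop :=
  ∀ ε > 0, ∃ (m : ℕ) (s : Finset X), B ⊆ ⋃ x ∈ s, iterBall x ε m

/-- α-bounded subset of a metric space. -/
def AlphaBounded {X : Type*} [PseudoMetricSpace X] (B : Set X) : Prop :=
  ∀ ε > 0, ∃ s : Finset X, B ⊆ ⋃ x ∈ s, chainBall x ε

/-- x and y are ε-chained. -/
def Chained {X : Type*} [PseudoMetricSpace X] (ε : ℝ) (x y : X) : Prop :=
  ∃ (n : ℕ) (u : ℕ → X), u 0 = x ∧ u n = y ∧ ∀ k < n, dist (u k) (u (k+1)) < ε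

/-- Bourbaki-Cauchy sequence. -/
def BourbakiCauchy {X : Type*} [PseudoMetricSpace X] (u : ℕ → X) : Prop :=
  ∀ ε > 0, ∃ (m N : ℕ) (x₀ : X), ∀ n ≥ N, u n ∈ iterBall x₀ ε m

/-- Bourbaki-complete metric space. -/
def BourbakiComplete (X : Type*) [PseudoMetricSpace X] : Prop :=
  ∀ u : ℕ → X, BourbakiCauchy u → ∃ x : X, MapClusterPt x Filter.atTop u

open Metric Set Filter

section Aux

variable {X : Type*} [PseudoMetricSpace X]

lemma iterBall_mono_eps {x : X} {ε ε' : ℝ} (h : ε ≤ ε') :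
    ∀ m, iterBall x ε m ⊆ iterBall x ε' m := by
  intro m
  induction m with
  | zero => exact ball_subset_ball h
  | succ m ih =>
    intro z hz
    obtain ⟨y, hy, hz⟩ := Set.mem_iUnion₂.1 hz
    exact Set.mem_iUnion₂.2 ⟨y, ih hy, ball_subset_ball h hz⟩

lemma self_mem_iterBall {x : X} {ε : ℝ} (hε : 0 < ε) : ∀ m, x ∈ iterBall x ε m := by
  intro m
  induction m with
  | zero => exact mem_ball_self hε
  | succ m ih => exact Set.mem_iUnion₂.2 ⟨x, ih, mem_ball_self hε⟩

lemma closure_iterBall_subset {x : X} {ε : ℝ} (hε : 0 < ε) (m : ℕ) :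
    closure (iterBall x ε m) ⊆ iterBall x ε (m + 1) := by
  intro z hz
  obtain ⟨y, hy, hd⟩ := Metric.mem_closure_iff.1 hz ε hε
  exact Set.mem_iUnion₂.2 ⟨y, hy, by simpa [Metric.mem_ball] using hd⟩

/-- Any sequence in a Bourbaki-bounded set has a Bourbaki-Cauchy subsequence. -/
lemma exists_bourbakiCauchy_subseq {B : Set X} (hB : BourbakiBounded B) (u : ℕ → X)
    (hu : ∀ n, u n ∈ B) : ∃ φ : ℕ → ℕ, StrictMono φ ∧ BourbakiCauchy (u ∘ φ) := by
  have step : ∀ (k : ℕ) (T : Set ℕ), T.Infinite →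
      ∃ T' : Set ℕ, T' ⊆ T ∧ T'.Infinite ∧
        ∃ (x : X) (m : ℕ), ∀ n ∈ T', u n ∈ iterBall x (1 / (k + 1)) m := by
    intro k T hT
    have hε : (0 : ℝ) < 1 / (k + 1) := by positivity
    obtain ⟨m, s, hs⟩ := hB _ hε
    have key : ∃ x ∈ s, {n ∈ T | u n ∈ iterBall x (1 / (k + 1)) m}.Infinite := by
      by_contra hc
      push_neg at hc
      have hsub : T ⊆ ⋃ x ∈ s, {n ∈ T | u n ∈ iterBall x (1 / (k + 1)) m} := by
        intro n hn
        obtain ⟨t, ht, htm⟩ := Set.mem_iUnion₂.1 (hs (hu n))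
        exact Set.mem_iUnion₂.2 ⟨t, ht, hn, htm⟩
      exact hT ((Set.Finite.biUnion s.finite_toSet
        (fun x hx => hc x hx)).subset hsub)
    obtain ⟨x, _, hinf⟩ := key
    exact ⟨_, fun n hn => hn.1, hinf, x, m, fun n hn => hn.2⟩
  choose! F hFsub hFinf hFball using step
  set S : ℕ → Set ℕ := fun k => Nat.rec (F 0 Set.univ) (fun k Sk => F (k + 1) Sk) k with hS
  have hS0 : S 0 = F 0 Set.univ := rfl
  have hSsucc : ∀ k, S (k + 1) = F (k + 1) (S k) := fun k => rfl
  have hSinf : ∀ k, (S k).Infinite := by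
    intro k
    induction k with
    | zero => exact hFinf 0 _ Set.infinite_univ
    | succ k ih => rw [hSsucc]; exact hFinf (k + 1) _ ih
  have hSnest : ∀ k, S (k + 1) ⊆ S k := fun k => hFsub (k + 1) _ (hSinf k)
  have hSmono : ∀ j k, k ≤ j → S j ⊆ S k := by
    intro j k h
    induction j with
    | zero => simp [Nat.le_zero.1 h]
    | succ j ih =>
      rcases Nat.lt_or_ge k (j + 1) with h' | h'
      · exact (hSnest j).trans (ih (Nat.lt_succ_iff.1 h'))
      · have : k = j + 1 := le_antisymm h h'
        subst this; rfl
  have hSball : ∀ k, ∃ (x : X) (m : ℕ), ∀ n ∈ S k, u n ∈ iterBall x (1 / (k + 1)) m := by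
    intro k
    cases k with
    | zero => exact hFball 0 _ Set.infinite_univ
    | succ k => rw [hSsucc]; exact hFball (k + 1) _ (hSinf k)
  -- build strictly monotone φ with φ k ∈ S k
  choose g hg1 hg2 using fun (k : ℕ) (a : ℕ) => (hSinf (k + 1)).exists_gt a
  set φ : ℕ → ℕ := fun k =>
    Nat.rec ((hSinf 0).nonempty.choose) (fun k p => g k p) k with hφ
  have hφsucc : ∀ k, φ (k + 1) = g k (φ k) := fun k => rfl
  have hφmem : ∀ k, φ k ∈ S k := by
    intro k
    cases k with
    | zero => exact (hSinf 0).nonempty.choose_spec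
    | succ k => rw [hφsucc]; exact hg1 k (φ k)
  have hφmono : StrictMono φ := strictMono_nat_of_lt_succ fun k => hg2 k (φ k)
  refine ⟨φ, hφmono, ?_⟩
  intro ε hε
  obtain ⟨k, hk⟩ := exists_nat_one_div_lt hε
  obtain ⟨x, m, hx⟩ := hSball k
  refine ⟨m, k, x, fun n hn => ?_⟩
  have : φ n ∈ S k := hSmono n k hn (hφmem n)
  exact iterBall_mono_eps hk.le m (hx _ this)

end Aux

theorem bourbakiComplete_iff_closed_bourbakiBounded_compact (X : Type*) [MetricSpace X] :
    BourbakiComplete X ↔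
      ∀ B : Set X, IsClosed B → BourbakiBounded B → IsCompact B := by
  constructor
  · intro h B hBcl hBb
    apply IsSeqCompact.isCompact
    intro u hu
    obtain ⟨φ, hφ, hφBC⟩ := exists_bourbakiCauchy_subseq hBb u hu
    obtain ⟨x, hx⟩ := h (u ∘ φ) hφBC
    obtain ⟨ψ, hψ, hψt⟩ := TopologicalSpace.FirstCountableTopology.tendsto_subseq hx
    refine ⟨x, ?_, φ ∘ ψ, hφ.comp hψ, hψt⟩
    exact hBcl.mem_of_tendsto hψt (Filter.Eventually.of_forall fun n => hu _)
  · intro h u hu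
    classical
    set B := closure (Set.range u) with hB
    have hBb : BourbakiBounded B := by
      intro ε hε
      obtain ⟨m, N, x₀, hm⟩ := hu ε hε
      refine ⟨m + 1, insert x₀ ((Finset.range N).image u), ?_⟩
      have hr : Set.range u ⊆ ⋃ x ∈ (insert x₀ ((Finset.range N).image u) : Finset X),
          iterBall x ε m := by
        rintro _ ⟨n, rfl⟩
        rcases Nat.lt_or_ge n N with hn | hn
        · refine Set.mem_iUnion₂.2 ⟨u n, ?_, self_mem_iterBall hε m⟩
          exact Finset.mem_insert_of_mem (Finset.mem_image.2 ⟨n, Finset.mem_range.2 hn, rfl⟩)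
        · exact Set.mem_iUnion₂.2 ⟨x₀, Finset.mem_insert_self _ _, hm n hn⟩
      calc B ⊆ closure (⋃ x ∈ (insert x₀ ((Finset.range N).image u) : Finset X),
            iterBall x ε m) := closure_mono hr
        _ = ⋃ x ∈ (insert x₀ ((Finset.range N).image u) : Finset X),
            closure (iterBall x ε m) := Finset.closure_biUnion _ _
        _ ⊆ ⋃ x ∈ (insert x₀ ((Finset.range N).image u) : Finset X),
            iterBall x ε (m + 1) :=
          Set.iUnion₂_mono fun x _ => closure_iterBall_subset hε m
    have hBc : IsCompact B := h B isClosed_closure hBb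
    obtain ⟨x, _, ψ, hψ, hψt⟩ := hBc.tendsto_subseq
      (fun n => subset_closure (Set.mem_range_self n))
    exact ⟨x, MapClusterPt.of_comp (hψ.tendsto_atTop) hψt.mapClusterPt⟩
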